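/- Let Λ = ∏_{x ∈ X} R_x be a direct product of integral domains indexed by a set X. Then the minimal spectrum Min(Λ) is compact (quasi-compact and Hausdorff) in the Zariski topology. -/

import Mathlib

set_option linter.unusedSectionVars false

open Classical in
/-- Characteristic function of a set, valued in a product ring. -/
noncomputable def eFn {X : Type*} (R : X → Type*) [∀ x, CommRing (R x)] (s : Set X) :
    ∀ x, R x := fun x => if x ∈ s then 1 else 0

section

variable {X : Type*} (R : X → Type*) [∀ x, CommRing (R x)] [∀ x, IsDomain (R x)]

lemma eFn_mul (s t : Set X) : eFn R s * eFn R t = eFn R (s ∩ t) := by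
  funext x
  simp only [eFn, Pi.mul_apply, Set.mem_inter_iff]
  by_cases hs : x ∈ s <;> by_cases ht : x ∈ t <;> simp [hs, ht]

lemma eFn_add_compl (s : Set X) : eFn R s + eFn R sᶜ = 1 := by
  funext x
  simp only [eFn, Pi.add_apply, Pi.one_apply, Set.mem_compl_iff]
  by_cases hs : x ∈ s <;> simp [hs]

lemma eFn_empty : eFn R (∅ : Set X) = 0 := by
  funext x; simp [eFn]

lemma eFn_zero_iff (s : Set X) (x : X) : eFn R s x = 0 ↔ x ∉ s := by
  simp only [eFn]
  by_cases hs : x ∈ s <;> simp [hs]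

/-- The minimal prime ideal associated to an ultrafilter. -/
def Iu (U : Ultrafilter X) : Ideal (∀ x, R x) where
  carrier := {f | {x | f x = 0} ∈ U}
  zero_mem' := by
    have : {x | (0 : ∀ x, R x) x = 0} = Set.univ := by ext x; simp
    rw [Set.mem_setOf_eq, this]
    exact Filter.univ_mem
  add_mem' := by
    intro f g hf hg
    refine U.toFilter.mem_of_superset (U.toFilter.inter_sets hf hg) ?_
    rintro x ⟨h1, h2⟩
    simp only [Set.mem_setOf_eq] at *
    simp [Pi.add_apply, h1, h2]
  smul_mem' := by
    intro c f hf
    refine U.toFilter.mem_of_superset hf ?_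
    intro x hx
    simp only [Set.mem_setOf_eq] at *
    simp [hx]

lemma mem_Iu (U : Ultrafilter X) (f : ∀ x, R x) : f ∈ Iu R U ↔ {x | f x = 0} ∈ U := Iff.rfl

lemma Iu_isPrime (U : Ultrafilter X) : (Iu R U).IsPrime := by
  constructor
  · intro h
    rw [Ideal.eq_top_iff_one, mem_Iu] at h
    have : {x | (1 : (∀ x, R x)) x = 0} = (∅ : Set X) := by
      ext x; simp
    rw [this] at h
    exact U.empty_notMem h
  · intro f g hfg
    rw [mem_Iu] at hfg ⊢
    rw [mem_Iu]
    have : {x | (f * g) x = 0} = {x | f x = 0} ∪ {x | g x = 0} := by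
      ext x; simp [mul_eq_zero]
    rw [this, Ultrafilter.union_mem_iff] at hfg
    exact hfg

/-- The ultrafilter associated to a prime ideal of the product. -/
noncomputable def Up (p : Ideal (∀ x, R x)) [hp : p.IsPrime] : Ultrafilter X :=
  Ultrafilter.ofComplNotMemIff
    { sets := {s | eFn R sᶜ ∈ p}
      univ_sets := by
        simp only [Set.mem_setOf_eq, Set.compl_univ, eFn_empty]
        exact p.zero_mem
      sets_of_superset := by
        intro s t hs hst
        simp only [Set.mem_setOf_eq] at *
        have h2 : eFn R sᶜ * eFn R tᶜ ∈ p := p.mul_mem_right _ hs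
        rwa [eFn_mul, Set.inter_eq_right.mpr (Set.compl_subset_compl.mpr hst)] at h2
      inter_sets := by
        intro s t hs ht
        simp only [Set.mem_setOf_eq] at *
        have h1 : eFn R (s ∩ t)ᶜ = eFn R sᶜ + eFn R tᶜ - eFn R sᶜ * eFn R tᶜ := by
          funext x
          simp only [eFn, Pi.sub_apply, Pi.add_apply, Pi.mul_apply, Set.mem_compl_iff,
            Set.mem_inter_iff]
          by_cases h1 : x ∈ s <;> by_cases h2 : x ∈ t <;> simp [h1, h2]
        rw [h1]
        exact sub_mem (add_mem hs ht) (p.mul_mem_right _ hs) }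
    (by
      intro s
      simp only [Filter.mem_mk, Set.mem_setOf_eq, compl_compl]
      constructor
      · intro h
        have h0 : eFn R s * eFn R sᶜ = 0 := by
          rw [eFn_mul, Set.inter_compl_self, eFn_empty]
        rcases hp.mem_or_mem (h0 ▸ p.zero_mem) with h1 | h1
        · exact absurd h1 h
        · exact h1
      · intro h1 h2
        exact hp.ne_top (Ideal.eq_top_iff_one _ |>.mpr
          (eFn_add_compl R s ▸ add_mem h2 h1)))

lemma mem_Up (p : Ideal (∀ x, R x)) [p.IsPrime] (s : Set X) :
    s ∈ Up R p ↔ eFn R sᶜ ∈ p := Iff.rfl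

lemma Iu_Up_le (p : Ideal (∀ x, R x)) [p.IsPrime] : Iu R (Up R p) ≤ p := by
  intro f hf
  rw [mem_Iu, mem_Up] at hf
  have : f = f * eFn R {x | f x = 0}ᶜ := by
    funext x
    simp only [Pi.mul_apply, eFn, Set.mem_compl_iff, Set.mem_setOf_eq]
    by_cases h : f x = 0 <;> simp [h]
  rw [this]
  exact p.mul_mem_left _ hf

lemma Up_Iu (U : Ultrafilter X) : Up R (Iu R U) (hp := Iu_isPrime R U) = U := by
  have := Iu_isPrime R U
  ext s
  rw [mem_Up, mem_Iu]
  have : {x | eFn R sᶜ x = 0} = s := by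
    ext x; rw [Set.mem_setOf_eq, eFn_zero_iff, Set.mem_compl_iff, not_not]
  rw [this]

lemma Iu_minimal (U : Ultrafilter X) : Iu R U ∈ minimalPrimes (∀ x, R x) := by
  refine ⟨⟨Iu_isPrime R U, bot_le⟩, ?_⟩
  intro q ⟨hq, _⟩ hle
  haveI := hq
  have h2 : Up R q = U := by
    refine Ultrafilter.coe_injective ((Ultrafilter.unique (Up R q) ?_)).symm
    refine Filter.le_def.mpr fun s hs => ?_
    have h3 : eFn R sᶜ ∈ Iu R U := hle hs
    rw [mem_Iu] at h3
    have h4 : {x | eFn R sᶜ x = 0} = s := by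
      ext x; rw [Set.mem_setOf_eq, eFn_zero_iff, Set.mem_compl_iff, not_not]
    rwa [h4] at h3
  calc Iu R U = Iu R (Up R q) := by rw [h2]
    _ ≤ q := Iu_Up_le R q

lemma minimal_eq_Iu (p : Ideal (∀ x, R x)) [hp : p.IsPrime]
    (hmin : p ∈ minimalPrimes (∀ x, R x)) : p = Iu R (Up R p) :=
  le_antisymm (hmin.2 ⟨Iu_isPrime R (Up R p), bot_le⟩ (Iu_Up_le R p)) (Iu_Up_le R p)

end

/-- The minimal spectrum of a product of integral domains is quasi-compact and Hausdorff in the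
Zariski topology. -/
theorem stmt3 {X : Type*} (R : X → Type*) [∀ x, CommRing (R x)] [∀ x, IsDomain (R x)] :
    CompactSpace {p : PrimeSpectrum (∀ x, R x) // p.asIdeal ∈ minimalPrimes (∀ x, R x)} ∧
      T2Space {p : PrimeSpectrum (∀ x, R x) // p.asIdeal ∈ minimalPrimes (∀ x, R x)} := by
  constructor
  · -- compactness: continuous surjection from Ultrafilter X
    let φ : Ultrafilter X → {p : PrimeSpectrum (∀ x, R x) // p.asIdeal ∈ minimalPrimes (∀ x, R x)} :=
      fun U => ⟨⟨Iu R U, Iu_isPrime R U⟩, Iu_minimal R U⟩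
    have hcont : Continuous φ := by
      apply Continuous.subtype_mk
      rw [PrimeSpectrum.isTopologicalBasis_basic_opens.continuous_iff]
      rintro _ ⟨f, rfl⟩
      have : (fun U => (⟨Iu R U, Iu_isPrime R U⟩ : PrimeSpectrum (∀ x, R x))) ⁻¹'
          (PrimeSpectrum.basicOpen f : Set (PrimeSpectrum (∀ x, R x))) =
          {U : Ultrafilter X | {x | f x = 0}ᶜ ∈ U} := by
        ext U
        simp only [Set.mem_preimage, SetLike.mem_coe, PrimeSpectrum.mem_basicOpen,
          Set.mem_setOf_eq, Ultrafilter.compl_mem_iff_notMem]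
        exact Iff.rfl
      rw [this]
      exact ultrafilter_isOpen_basic _
    have hsurj : Function.Surjective φ := by
      rintro ⟨p, hp⟩
      haveI := p.isPrime
      refine ⟨Up R p.asIdeal, ?_⟩
      apply Subtype.ext
      apply PrimeSpectrum.ext
      exact (minimal_eq_Iu R p.asIdeal hp).symm
    constructor
    rw [← Set.range_eq_univ.mpr hsurj]
    exact isCompact_range hcont
  · -- Hausdorff
    constructor
    rintro ⟨p, hp⟩ ⟨q, hq⟩ hne
    haveI := p.isPrime
    haveI := q.isPrime
    have hUp : Up R p.asIdeal ≠ Up R q.asIdeal := by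
      intro h
      apply hne
      apply Subtype.ext
      apply PrimeSpectrum.ext
      rw [minimal_eq_Iu R p.asIdeal hp, minimal_eq_Iu R q.asIdeal hq, h]
    -- find s ∈ Up p with s ∉ Up q
    obtain ⟨s, hs1, hs2⟩ : ∃ s : Set X, s ∈ Up R p.asIdeal ∧ s ∉ Up R q.asIdeal := by
      by_contra hcon
      push_neg at hcon
      apply hUp
      ext s
      constructor
      · exact hcon s
      · intro hs
        by_contra hns
        have : sᶜ ∈ Up R p.asIdeal := Ultrafilter.compl_mem_iff_notMem.mpr hns
        exact (Ultrafilter.compl_mem_iff_notMem.mp (hcon _ this)) hs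
    have hep : eFn R sᶜ ∈ p.asIdeal := hs1
    have heq : eFn R s ∈ q.asIdeal := by
      have : sᶜ ∈ Up R q.asIdeal := Ultrafilter.compl_mem_iff_notMem.mpr hs2
      rw [mem_Up, compl_compl] at this
      exact this
    refine ⟨Subtype.val ⁻¹' (PrimeSpectrum.basicOpen (eFn R s) : Set (PrimeSpectrum (∀ x, R x))),
      Subtype.val ⁻¹' (PrimeSpectrum.basicOpen (eFn R sᶜ) : Set (PrimeSpectrum (∀ x, R x))),
      (PrimeSpectrum.basicOpen _).isOpen.preimage continuous_subtype_val,
      (PrimeSpectrum.basicOpen _).isOpen.preimage continuous_subtype_val, ?_, ?_, ?_⟩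
    · simp only [Set.mem_preimage, SetLike.mem_coe, PrimeSpectrum.mem_basicOpen]
      intro h
      exact p.isPrime.ne_top (Ideal.eq_top_iff_one _ |>.mpr
        (eFn_add_compl R s ▸ add_mem h hep))
    · simp only [Set.mem_preimage, SetLike.mem_coe, PrimeSpectrum.mem_basicOpen]
      intro h
      exact q.isPrime.ne_top (Ideal.eq_top_iff_one _ |>.mpr
        (eFn_add_compl R s ▸ add_mem heq h))
    · rw [Set.disjoint_left]
      rintro ⟨r, hr⟩ h1 h2
      simp only [Set.mem_preimage, SetLike.mem_coe, PrimeSpectrum.mem_basicOpen] at h1 h2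
      have h0 : eFn R s * eFn R sᶜ = 0 := by
        rw [eFn_mul, Set.inter_compl_self, eFn_empty]
      rcases r.isPrime.mem_or_mem (h0 ▸ r.asIdeal.zero_mem) with h | h
      · exact h1 h
      · exact h2 h
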